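/- For all non-negative integers n and r, the Bernoulli polynomial B_n evaluated at r equals the sum over k from 0 to n of (-1)^k * k!/(k+1) * S_r(n+r, k+r), where S_r denotes the r-Stirling numbers of the second kind. -/

import Mathlib

open Finset Real

/-- Stirling numbers of the second kind `S(n, k)`. -/
def stirling2 : ℕ → ℕ → ℕ
  | 0, 0 => 1
  | 0, _ + 1 => 0
  | _ + 1, 0 => 0
  | n + 1, k + 1 => (k + 1) * stirling2 n (k + 1) + stirling2 n k

/-- The `r`-Stirling numbers of the second kind `S_r(n, k)` of Broder: the number of
partitions of `{1, …, n}` into `k` non-empty subsets such that `1, …, r` lie in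
distinct subsets (with the convention `S_r(n, k) = 0` for `n < r`). -/
def rStirling (r : ℕ) : ℕ → ℕ → ℕ
  | 0, k => if r = 0 ∧ k = 0 then 1 else 0
  | n + 1, k =>
    if n + 1 < r then 0
    else if n + 1 = r then (if k = r then 1 else 0)
    else
      match k with
      | 0 => 0
      | k + 1 => (k + 1) * rStirling r n (k + 1) + rStirling r n k


lemma rStirling_of_lt (r n k : ℕ) (h : n < r) : rStirling r n k = 0 := by
  match n with
  | 0 => rw [rStirling]; simp; rintro rfl; omega
  | n + 1 => rw [rStirling.eq_def]; simp [if_pos h]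

lemma rStirling_self (r k : ℕ) : rStirling r r k = if k = r then 1 else 0 := by
  match r with
  | 0 => rw [rStirling]; simp [and_comm]
  | m + 1 => rw [rStirling.eq_def]; simp

lemma rStirling_succ (r n k : ℕ) (h : r ≤ n) :
    rStirling r (n + 1) (k + 1) = (k + 1) * rStirling r n (k + 1) + rStirling r n k := by
  rw [rStirling.eq_def]
  dsimp only
  rw [if_neg (by omega), if_neg (by omega)]

lemma rStirling_succ_zero (r n : ℕ) (h : r ≤ n) : rStirling r (n + 1) 0 = 0 := by
  rw [rStirling.eq_def]
  dsimp only
  rw [if_neg (by omega), if_neg (by omega)]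

lemma rStirling_eq_zero_of_lt (r : ℕ) : ∀ n k, k < r → rStirling r n k = 0 := by
  intro n
  induction n with
  | zero => intro k hk; exact rStirling_of_lt _ _ _ (by omega)
  | succ n ih =>
    intro k hk
    rcases lt_trichotomy (n + 1) r with h | h | h
    · exact rStirling_of_lt _ _ _ h
    · rw [← h, rStirling_self]; simp; omega
    · match k with
      | 0 => exact rStirling_succ_zero _ _ (by omega)
      | k + 1 => rw [rStirling_succ _ _ _ (by omega), ih (k+1) (by omega), ih k (by omega)]; ring

lemma rStirling_eq_zero_of_gt (r : ℕ) : ∀ n k, n < k → rStirling r n k = 0 := by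
  intro n
  induction n with
  | zero => intro k hk; rw [rStirling]; simp; rintro rfl rfl; omega
  | succ n ih =>
    intro k hk
    rcases lt_trichotomy (n + 1) r with h | h | h
    · exact rStirling_of_lt _ _ _ h
    · rw [← h, rStirling_self]; simp; omega
    · match k with
      | k + 1 => rw [rStirling_succ _ _ _ (by omega), ih (k+1) (by omega), ih k (by omega)]; ring

lemma rStirling_base (r k : ℕ) : rStirling r r (k + r) = if k = 0 then 1 else 0 := by
  rw [rStirling_self]; simp

lemma rStirling_rec (r n k : ℕ) :
    rStirling r (n + 1 + r) (k + 1 + r) =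
      (k + 1 + r) * rStirling r (n + r) (k + 1 + r) + rStirling r (n + r) (k + r) := by
  have h1 : n + 1 + r = (n + r) + 1 := by omega
  have h2 : k + 1 + r = (k + r) + 1 := by omega
  rw [h1, h2, rStirling_succ _ _ _ (by omega)]

lemma rStirling_diag (r n : ℕ) : rStirling r (n + r) r = r ^ n := by
  induction n with
  | zero => simpa using rStirling_base r 0
  | succ n ih =>
    match r with
    | 0 => simpa using rStirling_succ_zero 0 n (by omega)
    | m + 1 =>
      have h1 : n + 1 + (m + 1) = (n + (m + 1)) + 1 := by omega
      rw [h1, rStirling_succ _ _ _ (by omega), ih,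
        rStirling_eq_zero_of_lt _ _ _ (by omega)]
      ring

lemma Ekey (r n k : ℕ) :
    (∑ j ∈ range (k+2), (-1:ℚ)^j * ((k+1).choose j) * ((j:ℚ)+r)^(n+1))
      = ((k:ℚ)+1+r) * (∑ j ∈ range (k+2), (-1:ℚ)^j * ((k+1).choose j) * ((j:ℚ)+r)^n)
        - ((k:ℚ)+1) * (∑ j ∈ range (k+1), (-1:ℚ)^j * (k.choose j) * ((j:ℚ)+r)^n) := by
  have hext : (∑ j ∈ range (k+1), (-1:ℚ)^j * (k.choose j) * ((j:ℚ)+r)^n)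
      = ∑ j ∈ range (k+2), (-1:ℚ)^j * (k.choose j) * ((j:ℚ)+r)^n := by
    rw [sum_range_succ (fun j => (-1:ℚ)^j * (k.choose j) * ((j:ℚ)+r)^n) (k+1)]
    simp [Nat.choose_eq_zero_of_lt (Nat.lt_succ_self k)]
  rw [hext, mul_sum, mul_sum, ← sum_sub_distrib]
  refine sum_congr rfl fun j hj => ?_
  have hjk : j ≤ k + 1 := by simpa [Nat.lt_succ_iff] using hj
  have hc := Nat.choose_mul_succ_eq k j
  have hcast : ((k + 1 - j : ℕ) : ℚ) = (k:ℚ) + 1 - j := by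
    push_cast [Nat.cast_sub hjk]; ring
  have hq : ((k.choose j : ℚ)) * ((k:ℚ)+1) = (((k+1).choose j : ℚ)) * ((k:ℚ)+1-(j:ℚ)) := by
    have := congrArg (Nat.cast : ℕ → ℚ) hc
    push_cast at this
    rw [← hcast]; exact_mod_cast hc
  have : ((j:ℚ)+r)^(n+1) = ((j:ℚ)+r)^n * ((j:ℚ)+r) := by ring
  rw [this]
  linear_combination ((-1:ℚ)^j * ((j:ℚ)+(r:ℚ))^n) * hq

lemma lemA (r : ℕ) : ∀ n k, ((k.factorial : ℚ)) * (rStirling r (n + r) (k + r) : ℚ) =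
    (-1:ℚ)^k * ∑ j ∈ range (k+1), (-1:ℚ)^j * (k.choose j) * ((j:ℚ)+r)^n := by
  intro n
  induction n with
  | zero =>
    intro k
    rw [zero_add, rStirling_base]
    have hq : ∑ j ∈ range (k+1), (-1:ℚ)^j * ((k.choose j):ℚ) * ((j:ℚ)+r)^0
        = if k = 0 then 1 else 0 := by
      have := Int.alternating_sum_range_choose (n := k)
      have h2 : ((∑ j ∈ range (k+1), (-1:ℤ)^j * (k.choose j) : ℤ) : ℚ)
          = ((if k = 0 then (1:ℤ) else 0) : ℚ) := by exact_mod_cast this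
      push_cast at h2
      simpa using h2
    rw [hq]
    split <;> simp_all
  | succ n ih =>
    intro k
    match k with
    | 0 => simpa using congrArg (Nat.cast : ℕ → ℚ) (rStirling_diag r (n+1))
    | k + 1 =>
      rw [rStirling_rec]
      push_cast
      rw [Ekey]
      have h1 := ih (k+1)
      have h2 := ih k
      push_cast at h1 h2
      have hfac : ((k+1).factorial : ℚ) = ((k:ℚ)+1) * (k.factorial : ℚ) := by
        push_cast [Nat.factorial_succ]; ring
      -- goal: (k+1)! * ((k+1+r) * f(n,k+1) + f(n,k)) = (-1)^(k+1) * ((k+1+r)*E1 - (k+1)*E0)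
      simp only [pow_succ] at h1 ⊢
      linear_combination ((k:ℚ)+1+(r:ℚ)) * h1 + ((k:ℚ)+1) * h2
        + ((rStirling r (n+r) (k+r):ℚ)) * hfac

lemma lemT (r : ℕ) : ∀ n, ∑ k ∈ range (n+1),
    (-1:ℚ)^k * (k.factorial:ℚ) * (rStirling r (n+1+r) (k+1+r) : ℚ) = ((n:ℚ)+1) * (r:ℚ)^n := by
  intro n
  induction n with
  | zero =>
    have h := rStirling_rec r 0 0
    simp only [zero_add] at h
    have h1 : rStirling r r (1 + r) = 0 := by simpa using rStirling_base r 1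
    have h2 : rStirling r r (0 + r) = 1 := by simpa using rStirling_base r 0
    simp only [zero_add] at h1 h2
    simp [h, h1, h2]
  | succ n ih =>
    have hrec : ∀ k, (rStirling r (n+1+1+r) (k+1+r) : ℚ)
        = ((k:ℚ)+1+(r:ℚ)) * (rStirling r (n+1+r) (k+1+r):ℚ) + (rStirling r (n+1+r) (k+r):ℚ) := by
      intro k
      have h := congrArg (Nat.cast : ℕ → ℚ) (rStirling_rec r (n+1) k)
      push_cast at h
      convert h using 2
    have hstep : ∑ k ∈ range (n+2),
        (-1:ℚ)^k * (k.factorial:ℚ) * (rStirling r (n+1+1+r) (k+1+r) : ℚ)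
        = ∑ k ∈ range (n+2),
          ((-1:ℚ)^k * (((k+1).factorial:ℚ)) * (rStirling r (n+1+r) (k+1+r):ℚ)
            + (r:ℚ) * ((-1:ℚ)^k * (k.factorial:ℚ) * (rStirling r (n+1+r) (k+1+r):ℚ))
            + (-1:ℚ)^k * (k.factorial:ℚ) * (rStirling r (n+1+r) (k+r):ℚ)) := by
      refine sum_congr rfl fun k _ => ?_
      rw [hrec k]
      have hfac : (((k+1).factorial:ℚ)) = ((k:ℚ)+1) * (k.factorial:ℚ) := by
        push_cast [Nat.factorial_succ]; ring
      rw [hfac]; ring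
    have hzero1 : (rStirling r (n+1+r) (n+1+1+r) : ℚ) = 0 := by
      rw [rStirling_eq_zero_of_gt r _ _ (by omega)]; norm_num
    have hS1 : ∑ k ∈ range (n+2),
        (-1:ℚ)^k * (((k+1).factorial:ℚ)) * (rStirling r (n+1+r) (k+1+r):ℚ)
        = ∑ k ∈ range (n+1),
          (-1:ℚ)^k * (((k+1).factorial:ℚ)) * (rStirling r (n+1+r) (k+1+r):ℚ) := by
      rw [sum_range_succ, hzero1]; ring
    have hS2 : ∑ k ∈ range (n+2),
        (-1:ℚ)^k * (k.factorial:ℚ) * (rStirling r (n+1+r) (k+1+r):ℚ) = ((n:ℚ)+1) * (r:ℚ)^n := by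
      rw [sum_range_succ, hzero1, ← ih]; ring
    have hS3 : ∑ k ∈ range (n+2),
        (-1:ℚ)^k * (k.factorial:ℚ) * (rStirling r (n+1+r) (k+r):ℚ)
        = (r:ℚ)^(n+1) - ∑ k ∈ range (n+1),
          (-1:ℚ)^k * (((k+1).factorial:ℚ)) * (rStirling r (n+1+r) (k+1+r):ℚ) := by
      rw [sum_range_succ']
      have hdiag : (rStirling r (n+1+r) (0+r) : ℚ) = (r:ℚ)^(n+1) := by
        rw [zero_add]
        exact_mod_cast congrArg (Nat.cast : ℕ → ℚ) (rStirling_diag r (n+1))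
      rw [hdiag]
      have : ∑ k ∈ range (n+1),
          (-1:ℚ)^(k+1) * (((k+1).factorial:ℚ)) * (rStirling r (n+1+r) (k+1+r):ℚ)
          = - ∑ k ∈ range (n+1),
            (-1:ℚ)^k * (((k+1).factorial:ℚ)) * (rStirling r (n+1+r) (k+1+r):ℚ) := by
        rw [← sum_neg_distrib]
        exact sum_congr rfl fun k _ => by ring
      simp only [this]
      norm_num [Nat.factorial]
      ring
    rw [hstep, sum_add_distrib, sum_add_distrib, ← mul_sum, hS1, hS2, hS3]
    push_cast
    ring

lemma binom_sum (n : ℕ) (y : ℚ) :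
    ∑ i ∈ range (n+1), (((n+1).choose i : ℕ) : ℚ) * y^i = (y+1)^(n+1) - y^(n+1) := by
  have h := add_pow y 1 (n+1)
  simp only [one_pow, mul_one] at h
  rw [sum_range_succ] at h
  simp only [Nat.choose_self, Nat.cast_one, mul_one] at h
  have : ∑ i ∈ range (n+1), (((n+1).choose i : ℕ) : ℚ) * y^i
      = ∑ i ∈ range (n+1), y^i * (((n+1).choose i : ℕ) : ℚ) := by
    exact sum_congr rfl fun i _ => by ring
  rw [this]
  linarith [h]

lemma shift_sum (k : ℕ) (g : ℕ → ℚ) :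
    ∑ j ∈ range (k+1), (-1:ℚ)^j * (k.choose j : ℚ) * (g (j+1) - g j)
      = - ∑ j ∈ range (k+2), (-1:ℚ)^j * ((k+1).choose j : ℚ) * g j := by
  set A := ∑ j ∈ range (k+1), (-1:ℚ)^j * (k.choose j : ℚ) * g (j+1) with hA
  set C := ∑ j ∈ range (k+1), (-1:ℚ)^j * (k.choose j : ℚ) * g j with hC
  set B := ∑ j ∈ range (k+1), (-1:ℚ)^j * (k.choose (j+1) : ℚ) * g (j+1) with hB
  have hL : ∑ j ∈ range (k+1), (-1:ℚ)^j * (k.choose j : ℚ) * (g (j+1) - g j) = A - C := by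
    rw [hA, hC, ← sum_sub_distrib]
    exact sum_congr rfl fun j _ => by ring
  have hCdec : C = - ∑ j ∈ range k, (-1:ℚ)^j * (k.choose (j+1) : ℚ) * g (j+1) + g 0 := by
    rw [hC, sum_range_succ']
    simp only [pow_zero, Nat.choose_zero_right, Nat.cast_one, one_mul]
    rw [← sum_neg_distrib]
    congr 1
    exact sum_congr rfl fun j _ => by ring
  have hBdec : B = ∑ j ∈ range k, (-1:ℚ)^j * (k.choose (j+1) : ℚ) * g (j+1) := by
    rw [hB, sum_range_succ, Nat.choose_eq_zero_of_lt (Nat.lt_succ_self k)]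
    simp
  have hBC : B = g 0 - C := by rw [hBdec, hCdec]; ring
  have hR : ∑ j ∈ range (k+2), (-1:ℚ)^j * ((k+1).choose j : ℚ) * g j = g 0 - A - B := by
    rw [sum_range_succ']
    simp only [pow_zero, Nat.choose_zero_right, Nat.cast_one, one_mul]
    have : ∀ j ∈ range (k+1), (-1:ℚ)^(j+1) * ((k+1).choose (j+1) : ℚ) * g (j+1)
        = -((-1:ℚ)^j * (k.choose j : ℚ) * g (j+1)) - ((-1:ℚ)^j * (k.choose (j+1) : ℚ) * g (j+1)) := by
      intro j _
      rw [Nat.choose_succ_succ]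
      push_cast
      ring
    rw [sum_congr rfl this, sum_sub_distrib]
    have hneg : ∑ x ∈ range (k+1), -((-1:ℚ)^x * (k.choose x : ℚ) * g (x+1)) = -A := by
      rw [hA, sum_neg_distrib]
    rw [hneg, show ∑ x ∈ range (k+1), (-1:ℚ)^x * (k.choose (x+1) : ℚ) * g (x+1) = B from hB.symm]
    ring
  rw [hL, hR, hBC]
  ring

lemma lemG (r n k : ℕ) :
    (k.factorial:ℚ) * ∑ i ∈ range (n+1), (((n+1).choose i : ℕ) : ℚ) * (rStirling r (i+r) (k+r) : ℚ)
      = (((k+1).factorial : ℕ) : ℚ) * (rStirling r (n+1+r) (k+1+r) : ℚ) := by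
  have step1 : (k.factorial:ℚ) * ∑ i ∈ range (n+1), (((n+1).choose i : ℕ) : ℚ) * (rStirling r (i+r) (k+r) : ℚ)
      = ∑ i ∈ range (n+1), (((n+1).choose i : ℕ) : ℚ) *
          ((-1:ℚ)^k * ∑ j ∈ range (k+1), (-1:ℚ)^j * (k.choose j : ℚ) * ((j:ℚ)+r)^i) := by
    rw [mul_sum]
    refine sum_congr rfl fun i _ => ?_
    rw [← lemA r i k]
    ring
  rw [step1]
  have step2 : ∑ i ∈ range (n+1), (((n+1).choose i : ℕ) : ℚ) *
          ((-1:ℚ)^k * ∑ j ∈ range (k+1), (-1:ℚ)^j * (k.choose j : ℚ) * ((j:ℚ)+r)^i)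
      = (-1:ℚ)^k * ∑ j ∈ range (k+1), (-1:ℚ)^j * (k.choose j : ℚ) *
          (∑ i ∈ range (n+1), (((n+1).choose i : ℕ) : ℚ) * ((j:ℚ)+r)^i) := by
    rw [mul_sum]
    simp_rw [mul_sum]
    rw [sum_comm]
    refine sum_congr rfl fun j _ => sum_congr rfl fun i _ => by ring
  rw [step2]
  have hshift := shift_sum k (fun m : ℕ => ((m:ℚ)+(r:ℚ))^(n+1))
  have step34 : ∑ j ∈ range (k+1), (-1:ℚ)^j * (k.choose j : ℚ) *
        (∑ i ∈ range (n+1), (((n+1).choose i : ℕ):ℚ) * ((j:ℚ)+r)^i)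
      = - ∑ j ∈ range (k+2), (-1:ℚ)^j * (((k+1).choose j : ℕ) : ℚ) * ((j:ℚ)+r)^(n+1) := by
    rw [← hshift]
    refine sum_congr rfl fun j _ => ?_
    rw [binom_sum n ((j:ℚ)+r)]
    push_cast
    ring
  rw [step34, lemA r (n+1) (k+1)]
  simp only [pow_succ]
  push_cast
  ring

lemma lemKEY (r n : ℕ) :
    ∑ i ∈ range (n+1), (((n+1).choose i : ℕ):ℚ) *
        (∑ k ∈ range (i+1), (-1:ℚ)^k * (k.factorial:ℚ)/((k:ℚ)+1) * (rStirling r (i+r) (k+r):ℚ))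
      = ((n:ℚ)+1) * (r:ℚ)^n := by
  have hext : ∀ i ∈ range (n+1),
      (((n+1).choose i : ℕ):ℚ) * (∑ k ∈ range (i+1), (-1:ℚ)^k * (k.factorial:ℚ)/((k:ℚ)+1) * (rStirling r (i+r) (k+r):ℚ))
      = ∑ k ∈ range (n+1), (((n+1).choose i : ℕ):ℚ) * ((-1:ℚ)^k * (k.factorial:ℚ)/((k:ℚ)+1) * (rStirling r (i+r) (k+r):ℚ)) := by
    intro i hi
    rw [mul_sum]
    refine sum_subset (by simp at hi ⊢; omega) ?_
    intro k _ hk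
    simp only [mem_range, not_lt] at hk
    rw [rStirling_eq_zero_of_gt r _ _ (by omega)]
    norm_num
  rw [sum_congr rfl hext, sum_comm]
  have hterm : ∀ k ∈ range (n+1),
      ∑ i ∈ range (n+1), (((n+1).choose i : ℕ):ℚ) * ((-1:ℚ)^k * (k.factorial:ℚ)/((k:ℚ)+1) * (rStirling r (i+r) (k+r):ℚ))
      = (-1:ℚ)^k * (k.factorial:ℚ) * (rStirling r (n+1+r) (k+1+r) : ℚ) := by
    intro k _
    have hG := lemG r n k
    have hfac : (((k+1).factorial : ℕ) : ℚ) = ((k:ℚ)+1) * (k.factorial:ℚ) := by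
      push_cast [Nat.factorial_succ]; ring
    rw [hfac] at hG
    have hne : ((k:ℚ)+1) ≠ 0 := by positivity
    have hre : ∑ i ∈ range (n+1), (((n+1).choose i : ℕ):ℚ) * ((-1:ℚ)^k * (k.factorial:ℚ)/((k:ℚ)+1) * (rStirling r (i+r) (k+r):ℚ))
        = ((-1:ℚ)^k/((k:ℚ)+1)) * ((k.factorial:ℚ) * ∑ i ∈ range (n+1), (((n+1).choose i : ℕ):ℚ) * (rStirling r (i+r) (k+r):ℚ)) := by
      rw [mul_sum, mul_sum]
      refine sum_congr rfl fun i _ => ?_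
      field_simp
    rw [hre, hG]
    field_simp
  rw [sum_congr rfl hterm]
  exact lemT r n

theorem bernoulliPoly_eval_eq_sum_rStirling (n r : ℕ) :
    (Polynomial.bernoulli n).eval (r : ℚ) =
      ∑ k ∈ Finset.range (n + 1),
        (-1 : ℚ) ^ k * (Nat.factorial k : ℚ) / (k + 1) * rStirling r (n + r) (k + r) := by
  induction n using Nat.strong_induction_on with
  | _ n ih =>
  have hsum := congrArg (Polynomial.eval (r:ℚ)) (Polynomial.sum_bernoulli n)
  simp only [Polynomial.eval_finset_sum, Polynomial.eval_smul, smul_eq_mul,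
    Polynomial.eval_monomial] at hsum
  have hkey := lemKEY r n
  rw [sum_range_succ] at hsum hkey
  have hCB : ∑ i ∈ range n, (((n+1).choose i : ℕ):ℚ) * (Polynomial.bernoulli i).eval (r:ℚ)
      = ∑ i ∈ range n, (((n+1).choose i : ℕ):ℚ) *
          (∑ k ∈ range (i+1), (-1:ℚ)^k * (k.factorial:ℚ)/((k:ℚ)+1) * (rStirling r (i+r) (k+r):ℚ)) := by
    refine sum_congr rfl fun i hi => ?_
    rw [ih i (mem_range.1 hi)]
  have hC : (((n+1).choose n : ℕ):ℚ) = (n:ℚ)+1 := by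
    rw [Nat.choose_succ_self_right]; push_cast; ring
  have hne : ((n:ℚ)+1) ≠ 0 := by positivity
  have hmain : ((n:ℚ)+1) * (Polynomial.bernoulli n).eval (r:ℚ)
      = ((n:ℚ)+1) * ∑ k ∈ range (n+1), (-1:ℚ)^k * (k.factorial:ℚ)/((k:ℚ)+1) * (rStirling r (n+r) (k+r):ℚ) := by
    rw [← hC]
    linarith [hsum, hkey, hCB]
  exact mul_left_cancel₀ hne hmain
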